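/- Let X_1, X_2, ... be i.i.d. complex random variables with distribution μ, let μ̄ be the pushforward of μ under z ↦ |z|, and suppose R > 0 satisfies ∫ log_-|x - R| dμ̄(x) < ∞. Define M_n(R) = sup_{|z|=R} |Σ_{k=1}^n 1/(z - X_k)|. Then almost surely limsup_{n→∞} (1/n) log M_n(R) ≤ 0. -/

import Mathlib

open MeasureTheory Filter

/-- `log_- t`: equals `|log t|` for `0 < t ≤ 1`, `0` for `t ≥ 1`, and `+∞` at `t = 0`. -/
noncomputable def logMinus (t : ℝ) : ENNReal :=
  if t = 0 then ⊤ else ENNReal.ofReal (max (-Real.log t) 0)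

open scoped ENNReal NNReal

lemma measurable_logMinus : Measurable logMinus := by
  unfold logMinus
  exact Measurable.ite (measurableSet_eq)
    measurable_const ((Real.measurable_log.neg.max measurable_const).ennreal_ofReal)

lemma sum_indicator_le (c : ℝ≥0∞) (m : ℕ) :
    ∑ n ∈ Finset.range m, (if ((n : ℝ≥0∞) + 1) ≤ c then (1 : ℝ≥0∞) else 0) ≤ c := by
  induction m with
  | zero => simp
  | succ m ih =>
    rw [Finset.sum_range_succ]
    by_cases h : ((m : ℝ≥0∞) + 1) ≤ c
    · have hall : ∑ n ∈ Finset.range m, (if ((n : ℝ≥0∞) + 1) ≤ c then (1 : ℝ≥0∞) else 0)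
          = m := by
        rw [Finset.sum_congr rfl fun n hn => if_pos ?_]
        · simp
        · refine le_trans ?_ h
          have : (n : ℝ≥0∞) ≤ m := by
            exact_mod_cast Nat.cast_le.2 (Nat.le_of_lt_succ (Nat.lt_succ_of_lt (Finset.mem_range.1 hn)))
          exact add_le_add_left this 1
      rw [hall, if_pos h]
      exact h
    · rw [if_neg h, add_zero]
      exact ih

lemma tsum_indicator_le (c : ℝ≥0∞) :
    ∑' n : ℕ, (if ((n : ℝ≥0∞) + 1) ≤ c then (1 : ℝ≥0∞) else 0) ≤ c := by
  rw [ENNReal.tsum_eq_iSup_sum]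
  refine iSup_le fun s => ?_
  refine le_trans (Finset.sum_le_sum_of_subset fun n hn => Finset.mem_range.2 ?_)
    (sum_indicator_le c (s.sup id + 1))
  exact Nat.lt_succ_of_le (Finset.le_sup (f := id) hn)

lemma tsum_meas_le {α : Type*} [MeasurableSpace α] (μ : Measure α) (f : α → ℝ≥0∞)
    (hf : Measurable f) :
    ∑' n : ℕ, μ {x | ((n : ℝ≥0∞) + 1) ≤ f x} ≤ ∫⁻ x, f x ∂μ := by
  have hms : ∀ n : ℕ, MeasurableSet {x | ((n : ℝ≥0∞) + 1) ≤ f x} :=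
    fun n => hf measurableSet_Ici
  calc ∑' n : ℕ, μ {x | ((n : ℝ≥0∞) + 1) ≤ f x}
      = ∑' n : ℕ, ∫⁻ x, Set.indicator {x | ((n : ℝ≥0∞) + 1) ≤ f x} 1 x ∂μ :=
        tsum_congr fun n => (lintegral_indicator_one (hms n)).symm
    _ = ∫⁻ x, ∑' n : ℕ, Set.indicator {x | ((n : ℝ≥0∞) + 1) ≤ f x} 1 x ∂μ := by
        rw [lintegral_tsum fun n => (measurable_one.indicator (hms n)).aemeasurable]
    _ ≤ ∫⁻ x, f x ∂μ := by
        refine lintegral_mono fun x => ?_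
        refine le_trans (le_of_eq ?_) (tsum_indicator_le (f x))
        exact tsum_congr fun n => by simp [Set.indicator_apply]

lemma det_limsup {u a : ℕ → ℝ} {ε : ℝ} (hε : 0 < ε)
    (ha : ∀ k, 0 ≤ a k) (hu0 : ∀ n, 0 ≤ u n)
    (hua : ∀ n, u n ≤ ∑ k ∈ Finset.range n, a k)
    (N : ℕ) (hbd : ∀ k, N ≤ k → a k ≤ Real.exp (ε * (k + 1))) :
    Filter.limsup (fun n : ℕ => (1 / n : ℝ) * Real.log (u n)) atTop ≤ ε := by
  set C : ℝ := ∑ k ∈ Finset.range N, a k with hCdef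
  have hC : 0 ≤ C := Finset.sum_nonneg fun k _ => ha k
  set v : ℕ → ℝ := fun n => ε + (Real.log (C + 1) + Real.log n) / n with hvdef
  -- the key pointwise bound
  have key : ∀ n : ℕ, max N 1 ≤ n → (1 / n : ℝ) * Real.log (u n) ≤ v n := by
    intro n hn
    have hN : N ≤ n := le_trans (le_max_left _ _) hn
    have h1 : 1 ≤ n := le_trans (le_max_right _ _) hn
    have hnR : (0 : ℝ) < n := by exact_mod_cast h1
    have h1R : (1 : ℝ) ≤ n := by exact_mod_cast h1
    -- sum bound
    have hsum : ∑ k ∈ Finset.range n, a k ≤ (C + n) * Real.exp (ε * n) := by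
      have hsplit : ∑ k ∈ Finset.range n, a k
          = C + ∑ k ∈ Finset.Ico N n, a k := by
        rw [hCdef, Finset.sum_range_add_sum_Ico a hN]
      have hIco : ∑ k ∈ Finset.Ico N n, a k ≤ (n : ℝ) * Real.exp (ε * n) := by
        have h2 : ∑ k ∈ Finset.Ico N n, a k
            ≤ ∑ _k ∈ Finset.Ico N n, Real.exp (ε * n) := by
          refine Finset.sum_le_sum fun k hk => ?_
          have hkn : k < n := (Finset.mem_Ico.1 hk).2
          refine (hbd k (Finset.mem_Ico.1 hk).1).trans ?_
          refine Real.exp_le_exp.2 ?_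
          have : (k : ℝ) + 1 ≤ n := by exact_mod_cast Nat.succ_le_of_lt hkn
          nlinarith
        rw [Finset.sum_const, nsmul_eq_mul] at h2
        refine h2.trans ?_
        have hcard : ((Finset.Ico N n).card : ℝ) ≤ n := by
          rw [Nat.card_Ico]
          exact_mod_cast Nat.sub_le n N
        have := Real.exp_pos (ε * n)
        nlinarith
      have hexp1 : (1 : ℝ) ≤ Real.exp (ε * n) :=
        Real.one_le_exp (by positivity)
      rw [hsplit]
      nlinarith
    -- log bound
    have hB : (0 : ℝ) < C + n := by linarith
    have hlog : Real.log (u n) ≤ Real.log (C + n) + ε * n := by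
      rcases eq_or_lt_of_le (hu0 n) with h0 | h0
      · rw [← h0, Real.log_zero]
        have h1' : (1 : ℝ) ≤ C + n := by linarith
        have := Real.log_nonneg h1'
        nlinarith
      · have := Real.log_le_log h0 ((hua n).trans hsum)
        rwa [Real.log_mul (ne_of_gt hB) (Real.exp_ne_zero _), Real.log_exp] at this
    have hlog2 : Real.log (C + n) ≤ Real.log (C + 1) + Real.log n := by
      have hle : C + n ≤ (C + 1) * n := by nlinarith
      have := Real.log_le_log hB hle
      rwa [Real.log_mul (by linarith) (ne_of_gt hnR)] at this
    have hfinal : (1 / n : ℝ) * Real.log (u n)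
        ≤ (1 / n : ℝ) * (Real.log (C + 1) + Real.log n + ε * n) := by
      refine mul_le_mul_of_nonneg_left ?_ (by positivity)
      linarith
    refine hfinal.trans (le_of_eq ?_)
    rw [hvdef]
    field_simp
    ring
  have hv : Tendsto v atTop (nhds ε) := by
    have h1 : Tendsto (fun n : ℕ => Real.log (C + 1) / n) atTop (nhds 0) :=
      tendsto_const_div_atTop_nhds_zero_nat _
    have h2 : Tendsto (fun n : ℕ => Real.log n / n) atTop (nhds 0) :=
      (Real.isLittleO_log_id_atTop.tendsto_div_nhds_zero).comp
        tendsto_natCast_atTop_atTop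
    have h3 : Tendsto (fun n : ℕ => (Real.log (C + 1) + Real.log n) / n)
        atTop (nhds 0) := by
      have := h1.add h2
      rw [add_zero] at this
      refine this.congr' ?_
      filter_upwards [eventually_ne_atTop 0] with n hn
      have hnR : (n : ℝ) ≠ 0 := Nat.cast_ne_zero.2 hn
      field_simp
    have := tendsto_const_nhds (x := ε) (f := atTop (α := ℕ)) |>.add h3
    rw [add_zero] at this
    exact this
  have hev : ∀ᶠ n : ℕ in atTop, (1 / n : ℝ) * Real.log (u n) ≤ v n :=
    eventually_atTop.2 ⟨max N 1, key⟩
  by_cases hcb : IsCoboundedUnder (· ≤ ·) atTop (fun n : ℕ => (1 / n : ℝ) * Real.log (u n))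
  · refine le_of_forall_pos_le_add fun δ hδ => ?_
    refine limsup_le_of_le hcb ?_
    have hvlt : ∀ᶠ n : ℕ in atTop, v n < ε + δ :=
      hv.eventually (eventually_lt_nhds (by linarith))
    filter_upwards [hev, hvlt] with n h1 h2
    exact le_of_lt (lt_of_le_of_lt h1 h2)
  · have hnb : ¬BddBelow {a : ℝ | ∀ᶠ n : ℕ in atTop, (1 / n : ℝ) * Real.log (u n) ≤ a} := by
      rintro ⟨b, hb⟩
      refine hcb ⟨b, fun a ha => hb ?_⟩
      rw [Filter.eventually_map] at ha
      exact ha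
    rw [Filter.limsup_eq, Real.sInf_of_not_bddBelow hnb]
    exact hε.le

/-- If `X_1, X_2, …` are i.i.d. with law `μ`, `μ̄` is the radial part of `μ`, and
`∫ log_-|x - R| dμ̄(x) < ∞`, then almost surely
`limsup (1/n) log M_n(R) ≤ 0`, where `M_n(R) = sup_{|z|=R} |Σ_{k=1}^n 1/(z - X_k)|`. -/
theorem limsup_log_Mn_le_zero {Ω : Type*} [MeasurableSpace Ω] (P : Measure Ω)
    [IsProbabilityMeasure P] (μ : Measure ℂ) [IsProbabilityMeasure μ] (X : ℕ → Ω → ℂ)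
    (hmeas : ∀ n, Measurable (X n))
    (hind : ProbabilityTheory.iIndepFun X P)
    (hdist : ∀ n, Measure.map (X n) P = μ)
    (R : ℝ) (hR : 0 < R)
    (hfin : ∫⁻ x, logMinus |x - R| ∂(Measure.map (fun z : ℂ => ‖z‖) μ) < ⊤) :
    ∀ᵐ ω ∂P, Filter.limsup
      (fun n : ℕ => (1 / n : ℝ) *
        Real.log (⨆ z : Metric.sphere (0 : ℂ) R,
          ‖∑ k ∈ Finset.range n, ((z : ℂ) - X k ω)⁻¹‖))
      atTop ≤ 0 := by
  set ν := Measure.map (fun z : ℂ => ‖z‖) μ with hν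
  have hXnorm : ∀ n, Measurable fun ω => ‖X n ω‖ := fun n => (hmeas n).norm
  have hmapν : ∀ n, Measure.map (fun ω => ‖X n ω‖) P = ν := by
    intro n
    rw [hν, ← hdist n, Measure.map_map measurable_norm (hmeas n)]
    rfl
  have hlm : Measurable fun x : ℝ => logMinus |x - R| :=
    measurable_logMinus.comp ((measurable_id.sub measurable_const).abs)
  have hint : ∀ n, ∫⁻ ω, logMinus |‖X n ω‖ - R| ∂P = ∫⁻ x, logMinus |x - R| ∂ν := by
    intro n
    rw [← hmapν n, lintegral_map hlm (hXnorm n)]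
  -- a.s. positivity of |‖X k‖ - R|
  have hpos : ∀ᵐ ω ∂P, ∀ k, 0 < |‖X k ω‖ - R| := by
    rw [ae_all_iff]
    intro k
    have h1 : ∀ᵐ ω ∂P, logMinus |‖X k ω‖ - R| < ⊤ := by
      refine ae_lt_top (hlm.comp (hXnorm k)) ?_
      rw [hint k]
      exact hfin.ne
    filter_upwards [h1] with ω hω
    rcases eq_or_lt_of_le (abs_nonneg (‖X k ω‖ - R)) with h0 | h0
    · rw [logMinus, if_pos h0.symm] at hω
      exact absurd hω (lt_irrefl _)
    · exact h0
  -- per-ε statement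
  have main : ∀ m : ℕ, ∀ᵐ ω ∂P, Filter.limsup
      (fun n : ℕ => (1 / n : ℝ) *
        Real.log (⨆ z : Metric.sphere (0 : ℂ) R,
          ‖∑ k ∈ Finset.range n, ((z : ℂ) - X k ω)⁻¹‖))
      atTop ≤ 1 / ((m : ℝ) + 1) := by
    intro m
    set ε : ℝ := 1 / ((m : ℝ) + 1) with hεdef
    have hε : 0 < ε := by positivity
    set T : ℕ → Set ℝ := fun n => {x | ENNReal.ofReal (ε * (n + 1)) ≤ logMinus |x - R|}
      with hTdef
    have hTmeas : ∀ n, MeasurableSet (T n) := fun n => hlm measurableSet_Ici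
    set A : ℕ → Set Ω := fun n => {ω | ENNReal.ofReal (ε * (n + 1)) ≤ logMinus |‖X n ω‖ - R|}
      with hAdef
    have hPA : ∀ n, P (A n) = ν (T n) := by
      intro n
      rw [← hmapν n, Measure.map_apply (hXnorm n) (hTmeas n)]
      rfl
    -- summability
    have hsum : (∑' n, P (A n)) ≠ ⊤ := by
      have hTf : ∀ n : ℕ, T n
          = {x | ((n : ℝ≥0∞) + 1) ≤ logMinus |x - R| / ENNReal.ofReal ε} := by
        intro n
        ext x
        simp only [hTdef, Set.mem_setOf_eq]
        rw [ENNReal.le_div_iff_mul_le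
          (Or.inl (by simp only [ne_eq, ENNReal.ofReal_eq_zero, not_le]; linarith))
          (Or.inl ENNReal.ofReal_ne_top)]
        have hcast : ((n : ℝ≥0∞) + 1) = ENNReal.ofReal ((n : ℝ) + 1) := by
          rw [ENNReal.ofReal_add (by positivity) zero_le_one, ENNReal.ofReal_natCast,
            ENNReal.ofReal_one]
        rw [hcast, ← ENNReal.ofReal_mul (by positivity), mul_comm ((n : ℝ) + 1) ε]
      have hle : (∑' n, ν (T n)) ≤ ∫⁻ x, logMinus |x - R| / ENNReal.ofReal ε ∂ν := by
        simp_rw [hTf]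
        exact tsum_meas_le ν _ (hlm.div_const _)
      have hfin2 : ∫⁻ x, logMinus |x - R| / ENNReal.ofReal ε ∂ν < ⊤ := by
        simp_rw [div_eq_mul_inv]
        rw [lintegral_mul_const' _ _ (ENNReal.inv_ne_top.mpr (ENNReal.ofReal_pos.2 hε).ne')]
        exact ENNReal.mul_lt_top hfin (ENNReal.inv_lt_top.2 (ENNReal.ofReal_pos.2 hε))
      simp_rw [hPA]
      exact (hle.trans_lt hfin2).ne
    have hBC := ae_eventually_notMem hsum
    filter_upwards [hBC, hpos] with ω hω hposω
    obtain ⟨N, hN⟩ := eventually_atTop.1 hω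
    have : Nonempty (Metric.sphere (0 : ℂ) R) :=
      (NormedSpace.sphere_nonempty.2 hR.le).to_subtype
    refine det_limsup (a := fun k => |‖X k ω‖ - R|⁻¹) hε
      (fun k => inv_nonneg.2 (abs_nonneg _))
      (fun n => Real.iSup_nonneg fun z => norm_nonneg _) ?_ N ?_
    · intro n
      refine ciSup_le fun z => ?_
      refine (norm_sum_le _ _).trans (Finset.sum_le_sum fun k _ => ?_)
      have hz : ‖(z : ℂ)‖ = R := mem_sphere_zero_iff_norm.1 z.2
      have h1 : |‖(z : ℂ)‖ - ‖X k ω‖| ≤ ‖(z : ℂ) - X k ω‖ := abs_norm_sub_norm_le _ _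
      rw [hz, abs_sub_comm] at h1
      rw [norm_inv]
      exact inv_anti₀ (hposω k) h1
    · intro k hk
      have hnotA := hN k hk
      rw [hAdef, Set.mem_setOf_eq, not_le] at hnotA
      set Y : ℝ := |‖X k ω‖ - R| with hYdef
      have hY : 0 < Y := hposω k
      rw [logMinus, if_neg hY.ne'] at hnotA
      have hεk : 0 < ε * (k + 1) := by positivity
      have hmax : max (-Real.log Y) 0 < ε * (k + 1) :=
        (ENNReal.ofReal_lt_ofReal_iff hεk).1 hnotA
      have hlog : Real.log Y⁻¹ < ε * (k + 1) := by
        rw [Real.log_inv]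
        exact lt_of_le_of_lt (le_max_left _ _) hmax
      have : Y⁻¹ = Real.exp (Real.log Y⁻¹) := (Real.exp_log (inv_pos.2 hY)).symm
      show Y⁻¹ ≤ Real.exp (ε * (k + 1))
      rw [this]
      exact (Real.exp_lt_exp.2 hlog).le
  filter_upwards [ae_all_iff.2 main] with ω hω
  exact ge_of_tendsto' tendsto_one_div_add_atTop_nhds_zero_nat hω
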